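/- arXiv:1009.5108 — 2 statements merged into one kernel-verified Lean document; each statement's English description precedes it below -/
import Mathlib

section
/- Let G be a bipartite graph with parameters (n, m, d) (left part {0,1}^n, right part {0,1}^m, left-degree D = 2^d) that is a (k, ε)-extractor. Then for every α > 1, G is (α, αε/(α−1))-low-congesting: for every left-subset S with |S| ≤ K = 2^k, the number of α-congested vertices in S is less than (α/(α−1))·ε·K. -/
open scoped Classical

/-- Number of edges from the left-subset `S` into the right-subset `Y`. -/
noncomputable def edges {L R : Type*} {D : ℕ}
    (nbr : L → Fin D → R) (S : Finset L) (Y : Finset R) : ℕ :=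
  ∑ x ∈ S, (Finset.univ.filter fun i => nbr x i ∈ Y).card

/-- `(k, ε)`-extractor property for a bipartite multigraph with left part
`{0,1}^n`, right part `{0,1}^m` and left-degree `D = 2^d`. -/
noncomputable def IsExtractor {n m d : ℕ} (nbr : Fin (2^n) → Fin (2^d) → Fin (2^m))
    (k : ℕ) (ε : ℝ) : Prop :=
  ∀ S : Finset (Fin (2^n)), 2^k ≤ S.card →
    ∀ Y : Finset (Fin (2^m)),
      |(edges nbr S Y : ℝ) / ((2^d : ℕ) * S.card) - (Y.card : ℝ) / (2^m : ℕ)| < ε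

/-- The `α`-clot of `S` with parameter `K = 2^k`: right vertices receiving more
than `α·D·K/M` edges from `S`. -/
noncomputable def clot {n m d : ℕ} (nbr : Fin (2^n) → Fin (2^d) → Fin (2^m))
    (S : Finset (Fin (2^n))) (k : ℕ) (α : ℝ) : Finset (Fin (2^m)) :=
  Finset.univ.filter fun y =>
    α * (2^d : ℕ) * (2^k : ℕ) / (2^m : ℕ) < (edges nbr S {y} : ℝ)

/-- Monotonicity of `edges` in the left set. -/
lemma edges_mono {L R : Type*} {D : ℕ} (nbr : L → Fin D → R) {S S' : Finset L}
    (h : S ⊆ S') (Y : Finset R) : edges nbr S Y ≤ edges nbr S' Y :=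
  Finset.sum_le_sum_of_subset h

/-- `edges` into a set is the sum of `edges` into its singletons. -/
lemma edges_eq_sum {L R : Type*} {D : ℕ} (nbr : L → Fin D → R)
    (S : Finset L) (Y : Finset R) :
    edges nbr S Y = ∑ y ∈ Y, edges nbr S {y} := by
  unfold edges
  rw [Finset.sum_comm]
  refine Finset.sum_congr rfl fun x _ => ?_
  simp only [Finset.card_filter, Finset.mem_singleton]
  rw [Finset.sum_comm]
  refine Finset.sum_congr rfl fun i _ => ?_
  simp [Finset.sum_ite_eq]

set_option maxHeartbeats 1000000 in
/-- a `(k, ε)`-extractor is `(α, αε/(α−1))`-low-congesting: every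
left-subset `S` with `|S| ≤ K = 2^k` contains fewer than `(α/(α−1))·ε·K`
`α`-congested vertices. -/
theorem stmt_3 {n m d : ℕ} (k : ℕ) (hk : k ≤ n) (ε : ℝ) (hε : 0 < ε)
    (nbr : Fin (2^n) → Fin (2^d) → Fin (2^m))
    (hext : IsExtractor nbr k ε) (α : ℝ) (hα : 1 < α) :
    ∀ S : Finset (Fin (2^n)), S.card ≤ 2^k →
      ((S.filter fun x => ∀ i : Fin (2^d), nbr x i ∈ clot nbr S k α).card : ℝ)
        < (α / (α - 1)) * ε * (2^k : ℕ) := by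
  intro S hS
  -- extend S to S' of cardinality exactly 2^k
  obtain ⟨S', hSS', hS'card⟩ :=
    Finset.exists_superset_card_eq hS
      (by rw [Fintype.card_fin]; exact Nat.pow_le_pow_right (by norm_num) hk)
  set C : Finset (Fin (2^m)) := clot nbr S' k α with hC
  set T : Finset (Fin (2^n)) :=
    S'.filter (fun x => ∀ i : Fin (2^d), nbr x i ∈ C) with hT
  -- congested vertices of S are congested vertices of S'
  have hsub : (S.filter fun x => ∀ i : Fin (2^d), nbr x i ∈ clot nbr S k α) ⊆ T := by
    intro x hx
    rw [Finset.mem_filter] at hx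
    rw [hT, Finset.mem_filter]
    refine ⟨hSS' hx.1, fun i => ?_⟩
    have h1 := hx.2 i
    rw [hC]
    simp only [clot, Finset.mem_filter, Finset.mem_univ, true_and] at h1 ⊢
    refine lt_of_lt_of_le h1 ?_
    exact_mod_cast edges_mono nbr hSS' _
  have hcard : ((S.filter fun x => ∀ i : Fin (2^d), nbr x i ∈ clot nbr S k α).card : ℝ)
      ≤ (T.card : ℝ) := by exact_mod_cast Finset.card_le_card hsub
  refine lt_of_le_of_lt hcard ?_
  -- abbreviations
  set E : ℕ := edges nbr S' C with hE
  have hDpos : (0:ℝ) < ((2^d : ℕ) : ℝ) := by positivity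
  have hKpos : (0:ℝ) < ((2^k : ℕ) : ℝ) := by positivity
  have hMpos : (0:ℝ) < ((2^m : ℕ) : ℝ) := by positivity
  have hα1 : (0:ℝ) < α - 1 := by linarith
  -- (1)  D * |T| ≤ E
  have h1 : (2^d) * T.card ≤ E := by
    have step : ∑ x ∈ T, (2^d) ≤ ∑ x ∈ T, (Finset.univ.filter fun i => nbr x i ∈ C).card := by
      refine Finset.sum_le_sum fun x hx => ?_
      rw [hT, Finset.mem_filter] at hx
      have : (Finset.univ.filter fun i => nbr x i ∈ C) = Finset.univ := by
        ext i; simp [hx.2 i]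
      rw [this, Finset.card_univ, Fintype.card_fin]
    have hTS : T ⊆ S' := by rw [hT]; exact Finset.filter_subset _ _
    calc (2^d) * T.card = ∑ _x ∈ T, (2^d) := by rw [Finset.sum_const, smul_eq_mul, mul_comm]
    _ ≤ ∑ x ∈ T, (Finset.univ.filter fun i => nbr x i ∈ C).card := step
    _ ≤ ∑ x ∈ S', (Finset.univ.filter fun i => nbr x i ∈ C).card :=
        Finset.sum_le_sum_of_subset hTS
    _ = E := by rw [hE]; unfold edges; exact Finset.sum_congr rfl fun x _ => by congr
  -- (2)  |C| * (α D K / M) ≤ E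
  have h2 : (C.card : ℝ) * (α * ((2^d : ℕ) : ℝ) * ((2^k : ℕ) : ℝ) / ((2^m : ℕ) : ℝ))
      ≤ (E : ℝ) := by
    have hb : ∀ y ∈ C, α * ((2^d : ℕ) : ℝ) * ((2^k : ℕ) : ℝ) / ((2^m : ℕ) : ℝ)
        ≤ ((edges nbr S' {y} : ℕ) : ℝ) := by
      intro y hy
      rw [hC] at hy
      simp only [clot, Finset.mem_filter, Finset.mem_univ, true_and] at hy
      exact le_of_lt hy
    have := Finset.card_nsmul_le_sum C (fun y => ((edges nbr S' {y} : ℕ) : ℝ))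
      (α * ((2^d : ℕ) : ℝ) * ((2^k : ℕ) : ℝ) / ((2^m : ℕ) : ℝ)) hb
    rw [nsmul_eq_mul] at this
    calc (C.card : ℝ) * (α * ((2^d : ℕ) : ℝ) * ((2^k : ℕ) : ℝ) / ((2^m : ℕ) : ℝ))
        ≤ ∑ y ∈ C, ((edges nbr S' {y} : ℕ) : ℝ) := this
    _ = (E : ℝ) := by rw [hE, edges_eq_sum]; push_cast; ring
  -- (3)  extractor inequality
  have h3 : (E : ℝ) / (((2^d : ℕ) : ℝ) * ((2^k : ℕ) : ℝ)) - (C.card : ℝ) / ((2^m : ℕ) : ℝ)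
      < ε := by
    have hx := hext S' (le_of_eq hS'card.symm) C
    rw [hS'card] at hx
    refine lt_of_le_of_lt (le_abs_self _) ?_
    calc |(E : ℝ) / (((2^d : ℕ) : ℝ) * ((2^k : ℕ) : ℝ)) - (C.card : ℝ) / ((2^m : ℕ) : ℝ)|
        = |(edges nbr S' C : ℝ) / ((2^d : ℕ) * ((2^k : ℕ) : ℕ)) - (C.card : ℝ) / (2^m : ℕ)| := by
          rw [hE]
    _ < ε := hx
  -- now pure arithmetic
  have hDK : (0:ℝ) < ((2^d : ℕ) : ℝ) * ((2^k : ℕ) : ℝ) := mul_pos hDpos hKpos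
  have h3' : (E : ℝ) < ((2^d : ℕ) : ℝ) * ((2^k : ℕ) : ℝ)
      * ((C.card : ℝ) / ((2^m : ℕ) : ℝ) + ε) := by
    have h := (div_lt_iff₀ hDK).mp (by linarith [h3] :
      (E : ℝ) / (((2^d : ℕ) : ℝ) * ((2^k : ℕ) : ℝ)) < (C.card : ℝ) / ((2^m : ℕ) : ℝ) + ε)
    linarith [h]
  have hCbound : (C.card : ℝ) / ((2^m : ℕ) : ℝ) < ε / (α - 1) := by
    rcases Nat.eq_zero_or_pos C.card with h0 | h0
    · rw [h0]; simp only [Nat.cast_zero, zero_div]; positivity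
    · have h2' : α * (((2^d : ℕ) : ℝ) * ((2^k : ℕ) : ℝ) * ((C.card : ℝ) / ((2^m : ℕ) : ℝ)))
          ≤ (E : ℝ) := by
        have heq : (C.card : ℝ) * (α * ((2^d : ℕ) : ℝ) * ((2^k : ℕ) : ℝ) / ((2^m : ℕ) : ℝ))
            = α * (((2^d : ℕ) : ℝ) * ((2^k : ℕ) : ℝ) * ((C.card : ℝ) / ((2^m : ℕ) : ℝ))) := by
          ring
        linarith [h2, heq]
      have key : (α - 1) * (((2^d : ℕ) : ℝ) * ((2^k : ℕ) : ℝ))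
          * ((C.card : ℝ) / ((2^m : ℕ) : ℝ))
          < ((2^d : ℕ) : ℝ) * ((2^k : ℕ) : ℝ) * ε := by nlinarith [h2', h3']
      rw [lt_div_iff₀ hα1]
      have hpos := hDK
      nlinarith [key, hDK]
  -- finish
  have h1' : ((2^d : ℕ) : ℝ) * (T.card : ℝ) ≤ (E : ℝ) := by exact_mod_cast h1
  have final : ((2^d : ℕ) : ℝ) * (T.card : ℝ)
      < ((2^d : ℕ) : ℝ) * (((2^k : ℕ) : ℝ) * (ε / (α - 1) + ε)) := by
    calc ((2^d : ℕ) : ℝ) * (T.card : ℝ) ≤ (E : ℝ) := h1'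
    _ < ((2^d : ℕ) : ℝ) * ((2^k : ℕ) : ℝ) * ((C.card : ℝ) / ((2^m : ℕ) : ℝ) + ε) := h3'
    _ ≤ ((2^d : ℕ) : ℝ) * ((2^k : ℕ) : ℝ) * (ε / (α - 1) + ε) := by
        apply mul_le_mul_of_nonneg_left (by linarith [hCbound]) (le_of_lt hDK)
    _ = ((2^d : ℕ) : ℝ) * (((2^k : ℕ) : ℝ) * (ε / (α - 1) + ε)) := by ring
  have hT' : (T.card : ℝ) < ((2^k : ℕ) : ℝ) * (ε / (α - 1) + ε) :=
    lt_of_mul_lt_mul_left final (le_of_lt hDpos)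
  have heq2 : ((2^k : ℕ) : ℝ) * (ε / (α - 1) + ε) = (α / (α - 1)) * ε * ((2^k : ℕ) : ℝ) := by
    field_simp
    ring
  linarith [hT', heq2]
end

section
/- Let G be a (k, ε)-extractor with parameters (n, m, d), S a left-subset of size K = 2^k, and T ⊆ S the set of α-congested vertices for α > 1. Then |T| < (α/(α−1))·ε·K. -/
open scoped Classical

lemma edges_eq_sum_singletons {L R : Type*} [DecidableEq R] {D : ℕ}
    (nbr : L → Fin D → R) (S : Finset L) (Y : Finset R) :
    edges nbr S Y = ∑ y ∈ Y, edges nbr S {y} := by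
  classical
  unfold edges
  rw [Finset.sum_comm]
  refine Finset.sum_congr rfl fun x _ => ?_
  simp only [Finset.card_filter, Finset.mem_singleton]
  rw [Finset.sum_comm]
  refine Finset.sum_congr rfl fun i _ => ?_
  simp [Finset.sum_ite_eq]

/-- if `G` is a `(k, ε)`-extractor, `S` has size `K = 2^k` and
`T ⊆ S` is the set of `α`-congested vertices of `S` (those all of whose
neighbours lie in the `α`-clot of `S`), then `|T| < (α/(α−1))·ε·K`. -/
theorem stmt_5 {n m d : ℕ} (k : ℕ) (ε : ℝ) (hε : 0 < ε)
    (nbr : Fin (2^n) → Fin (2^d) → Fin (2^m))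
    (hext : IsExtractor nbr k ε) (α : ℝ) (hα : 1 < α)
    (S : Finset (Fin (2^n))) (hS : S.card = 2^k)
    (T : Finset (Fin (2^n)))
    (hT : T = S.filter fun x => ∀ i : Fin (2^d), nbr x i ∈ clot nbr S k α) :
    (T.card : ℝ) < (α / (α - 1)) * ε * (2^k : ℕ) := by
  classical
  set Y : Finset (Fin (2^m)) := clot nbr S k α with hY
  have hDpos : (0:ℝ) < ((2^d : ℕ) : ℝ) := by positivity
  have hKpos : (0:ℝ) < ((2^k : ℕ) : ℝ) := by positivity
  have hMpos : (0:ℝ) < ((2^m : ℕ) : ℝ) := by positivity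
  have hα1 : (0:ℝ) < α - 1 := by linarith
  have hαpos : (0:ℝ) < α := by linarith
  -- notation
  set Dr : ℝ := ((2^d : ℕ) : ℝ) with hDr
  set Kr : ℝ := ((2^k : ℕ) : ℝ) with hKr
  set Mr : ℝ := ((2^m : ℕ) : ℝ) with hMr
  set EY : ℝ := ((edges nbr S Y : ℕ) : ℝ) with hEY
  -- extractor property applied to S, Y
  have hx := hext S hS.ge Y
  rw [hS] at hx
  have h1 : EY / (Dr * Kr) - (Y.card : ℝ) / Mr < ε := lt_of_abs_lt hx
  -- clot bound: each y ∈ Y receives more than α·D·K/M edges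
  have h2 : (Y.card : ℝ) * (α * Dr * Kr / Mr) ≤ EY := by
    rw [hEY, edges_eq_sum_singletons nbr S Y, Nat.cast_sum,
      Finset.card_eq_sum_ones Y, Nat.cast_sum, Finset.sum_mul]
    refine Finset.sum_le_sum fun y hy => ?_
    have hy' : α * Dr * Kr / Mr < ((edges nbr S {y} : ℕ) : ℝ) := by
      simp only [hY, clot, Finset.mem_filter] at hy
      exact hy.2
    simpa using hy'.le
  -- all edges of T land in Y, so D·|T| ≤ edges S Y
  have h3 : Dr * (T.card : ℝ) ≤ EY := by
    have hTS : T ⊆ S := hT ▸ Finset.filter_subset _ _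
    have step1 : edges nbr T Y ≤ edges nbr S Y := by
      unfold edges
      exact Finset.sum_le_sum_of_subset hTS
    have step2 : edges nbr T Y = 2^d * T.card := by
      unfold edges
      trans ∑ _x ∈ T, 2^d
      · refine Finset.sum_congr rfl fun x hx => ?_
        have hx2 := hx
        rw [hT, Finset.mem_filter] at hx2
        simp [hx2.2]
      · rw [Finset.sum_const, smul_eq_mul, Nat.mul_comm]
    have hle : (2^d) * T.card ≤ edges nbr S Y := step2 ▸ step1
    have : ((2^d * T.card : ℕ) : ℝ) ≤ ((edges nbr S Y : ℕ) : ℝ) := by exact_mod_cast hle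
    rw [hEY, hDr]
    push_cast at this ⊢
    linarith
  -- arithmetic
  have h1' : EY < ((Y.card : ℝ) / Mr + ε) * (Dr * Kr) := by
    rw [← div_lt_iff₀ (by positivity)]
    linarith
  have h2' : (Y.card : ℝ) * (α * Dr * Kr) ≤ EY * Mr := by
    have h := mul_le_mul_of_nonneg_right h2 hMpos.le
    calc (Y.card : ℝ) * (α * Dr * Kr)
        = (Y.card : ℝ) * (α * Dr * Kr / Mr) * Mr := by field_simp
      _ ≤ EY * Mr := h
  have h1'' : EY * Mr < (Y.card : ℝ) * (Dr * Kr) + ε * Dr * Kr * Mr := by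
    have h := mul_lt_mul_of_pos_right h1' hMpos
    calc EY * Mr < ((Y.card : ℝ) / Mr + ε) * (Dr * Kr) * Mr := h
      _ = (Y.card : ℝ) * (Dr * Kr) + ε * Dr * Kr * Mr := by field_simp
  have e0 := mul_lt_mul_of_pos_left h1'' hαpos
  have e1 : (α - 1) * (EY * Mr) < α * (ε * Dr * Kr * Mr) := by nlinarith [e0, h2']
  have e2 : (α - 1) * (Dr * (T.card : ℝ) * Mr) < α * (ε * Dr * Kr * Mr) := by
    have := mul_le_mul_of_nonneg_left (mul_le_mul_of_nonneg_right h3 hMpos.le) hα1.le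
    nlinarith [e1, this]
  have key : (T.card : ℝ) * (α - 1) < α * ε * Kr := by
    have hpos : (0:ℝ) < Dr * Mr := by positivity
    rw [← mul_lt_mul_iff_left₀ hpos]
    nlinarith [e2]
  rw [div_mul_eq_mul_div, div_mul_eq_mul_div, lt_div_iff₀ hα1]
  linarith [key]
end
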